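/- Let A₀ be an (L,S)-uniform 2^{-LS}-set with branching numbers (R_s)_{s∈[S]}, and let 𝒮 ⊆ {0,...,S-1}. Then there exists an (L,S)-uniform subset A ⊆ A₀ with branching numbers (R'_s) satisfying: R'_s = 1 for s ∈ 𝒮 and R'_s = R_s otherwise; |A| ≥ (∏_{s∈𝒮} R_s^{-1})·|A₀|; and for s ∉ 𝒮 and all I ∈ D_{Ls}(A), A^I_L = (A₀)^I_L. -/

import Mathlib

open Set Metric Pointwise

noncomputable section

/-- The half-open dyadic cube of side `2^{-k}` indexed by `j ∈ ℤ^d`. -/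
def dyadicCube (d k : ℕ) (j : Fin d → ℤ) : Set (EuclideanSpace ℝ (Fin d)) :=
  {x | ∀ i, (j i : ℝ) ≤ 2 ^ k * x i ∧ 2 ^ k * x i < j i + 1}

/-- Indices of dyadic cubes of side `2^{-k}` meeting `A`. -/
def covIdx (d k : ℕ) (A : Set (EuclideanSpace ℝ (Fin d))) : Set (Fin d → ℤ) :=
  {j | (A ∩ dyadicCube d k j).Nonempty}

/-- The dyadic covering number `|A|_{2^{-k}}`. -/
def covNum (d k : ℕ) (A : Set (EuclideanSpace ℝ (Fin d))) : ℕ :=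
  (covIdx d k A).ncard

/-- The unit cube `[0,1)^d`. -/
def unitCube (d : ℕ) : Set (EuclideanSpace ℝ (Fin d)) := {x | ∀ i, 0 ≤ x i ∧ x i < 1}

/-- A `2^{-m}`-set : a subset of `2^{-m}ℤ^d ∩ [0,1)^d`. -/
def IsDyadicSet (d m : ℕ) (A : Set (EuclideanSpace ℝ (Fin d))) : Prop :=
  A ⊆ unitCube d ∧ ∀ x ∈ A, ∀ i, ∃ n : ℤ, x i = n / 2 ^ m

/-- `(L,S)`-uniformity with branching numbers `R s`. -/
def IsUniform (d L S : ℕ) (R : ℕ → ℕ) (A : Set (EuclideanSpace ℝ (Fin d))) : Prop :=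
  ∀ s < S, ∀ j ∈ covIdx d (s * L) A,
    covNum d ((s + 1) * L) (A ∩ dyadicCube d (s * L) j) = R s

/-- The homothety mapping the dyadic cube of level `k` with index `j` onto `[0,1)^d`. -/
def renorm (d k : ℕ) (j : Fin d → ℤ) (y : EuclideanSpace ℝ (Fin d)) :
    EuclideanSpace ℝ (Fin d) := WithLp.toLp 2 (fun i => 2 ^ k * y i - j i)

/-- The `2^{-L}`-set associated to a set `B ⊆ [0,1)^d`: representatives `j/2^L` of
dyadic cubes of side `2^{-L}` meeting `B`. -/
def discretize (d L : ℕ) (B : Set (EuclideanSpace ℝ (Fin d))) :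
    Set (EuclideanSpace ℝ (Fin d)) :=
  {x | ∃ j ∈ covIdx d L B, x = fun i => (j i : ℝ) / 2 ^ L}


/-! ### auxiliary lemmas -/

/-- The index of the dyadic cube of level `k` containing `x`. -/
def idx (d k : ℕ) (x : EuclideanSpace ℝ (Fin d)) : Fin d → ℤ := fun i => ⌊(2:ℝ) ^ k * x i⌋

lemma mem_dyadicCube_iff {d k : ℕ} {j : Fin d → ℤ} {x : EuclideanSpace ℝ (Fin d)} :
    x ∈ dyadicCube d k j ↔ idx d k x = j := by
  simp only [dyadicCube, mem_setOf_eq, idx, funext_iff]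
  refine forall_congr' fun i => ?_
  rw [Int.floor_eq_iff]

lemma mem_covIdx_iff {d k : ℕ} {A : Set (EuclideanSpace ℝ (Fin d))} {j : Fin d → ℤ} :
    j ∈ covIdx d k A ↔ ∃ x ∈ A, idx d k x = j := by
  constructor
  · rintro ⟨x, hxA, hx⟩; exact ⟨x, hxA, mem_dyadicCube_iff.1 hx⟩
  · rintro ⟨x, hxA, hx⟩; exact ⟨x, hxA, mem_dyadicCube_iff.2 hx⟩

lemma floor_div_int' (u : ℝ) (n : ℤ) (hn : 0 < n) : ⌊u / (n : ℝ)⌋ = ⌊u⌋ / n := by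
  have hn' : (0:ℝ) < (n : ℝ) := by exact_mod_cast hn
  have hmod := Int.mul_ediv_add_emod ⌊u⌋ n
  have hmn := Int.emod_nonneg ⌊u⌋ (ne_of_gt hn)
  have hml := Int.emod_lt_of_pos ⌊u⌋ hn
  rw [Int.floor_eq_iff]
  constructor
  · rw [le_div_iff₀ hn']
    have h1 : ((⌊u⌋ / n : ℤ) : ℝ) * n ≤ (⌊u⌋ : ℝ) := by
      have e1 : (⌊u⌋ / n) * n + ⌊u⌋ % n = ⌊u⌋ := by rw [mul_comm]; exact hmod
      have : (⌊u⌋ / n) * n ≤ ⌊u⌋ := by linarith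
      exact_mod_cast this
    exact h1.trans (Int.floor_le u)
  · rw [div_lt_iff₀ hn']
    have h2 : (⌊u⌋ : ℝ) + 1 ≤ ((⌊u⌋ / n : ℤ) + 1 : ℝ) * n := by
      have : ⌊u⌋ + 1 ≤ (⌊u⌋ / n + 1) * n := by
        have e1 : (⌊u⌋ / n) * n + ⌊u⌋ % n = ⌊u⌋ := by rw [mul_comm]; exact hmod
        have e2 : (⌊u⌋ / n + 1) * n = ⌊u⌋ / n * n + n := by ring
        linarith
      calc (⌊u⌋ : ℝ) + 1 = ((⌊u⌋ + 1 : ℤ) : ℝ) := by push_cast; ring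
        _ ≤ (((⌊u⌋ / n + 1) * n : ℤ) : ℝ) := by exact_mod_cast this
        _ = ((⌊u⌋ / n : ℤ) + 1 : ℝ) * n := by push_cast; ring
    linarith [Int.lt_floor_add_one u]

lemma floor_pow_mul (a : ℝ) (k n : ℕ) :
    ⌊(2:ℝ) ^ k * a⌋ = ⌊(2:ℝ) ^ (k + n) * a⌋ / (2 ^ n : ℤ) := by
  have h2 : (0:ℤ) < 2 ^ n := by positivity
  have : (2:ℝ) ^ k * a = ((2:ℝ) ^ (k + n) * a) / ((2 ^ n : ℤ) : ℝ) := by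
    push_cast
    rw [pow_add]
    field_simp
  rw [this, floor_div_int' _ _ h2]

/-- Two points in the same dyadic cube of level `k` lie in the same cube at any
coarser level `k' ≤ k`. -/
lemma idx_eq_of_le {d : ℕ} {k' k : ℕ} (h : k' ≤ k) {x y : EuclideanSpace ℝ (Fin d)}
    (hxy : idx d k x = idx d k y) : idx d k' x = idx d k' y := by
  funext i
  have hk : k = k' + (k - k') := by omega
  have := congrFun hxy i
  simp only [idx] at this ⊢
  rw [hk] at this
  rw [floor_pow_mul _ k' (k - k'), floor_pow_mul _ k' (k - k'), this]

lemma discretize_congr {d L : ℕ} {B B' : Set (EuclideanSpace ℝ (Fin d))}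
    (h : covIdx d L B = covIdx d L B') : discretize d L B = discretize d L B' := by
  unfold discretize; rw [h]

/-- A dyadic set is finite. -/
lemma IsDyadicSet.finite {d m : ℕ} {A : Set (EuclideanSpace ℝ (Fin d))}
    (hA : IsDyadicSet d m A) : A.Finite := by
  have hinj : Set.InjOn (idx d m) A := by
    intro x hx y hy hxy
    ext i
    obtain ⟨nx, hnx⟩ := hA.2 x hx i
    obtain ⟨ny, hny⟩ := hA.2 y hy i
    have h2 : (0:ℝ) < 2 ^ m := by positivity
    have ex : (2:ℝ) ^ m * x i = nx := by rw [hnx]; field_simp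
    have ey : (2:ℝ) ^ m * y i = ny := by rw [hny]; field_simp
    have := congrFun hxy i
    simp only [idx, ex, ey, Int.floor_intCast] at this
    rw [hnx, hny, this]
  have himg : (idx d m '' A).Finite := by
    apply Set.Finite.subset (Set.Finite.pi (fun i : Fin d => Set.finite_Ico (0:ℤ) (2 ^ m)))
    rintro _ ⟨x, hx, rfl⟩
    intro i _
    have hx1 := (hA.1 hx) i
    refine ⟨Int.floor_nonneg.2 (mul_nonneg (by positivity) hx1.1), ?_⟩
    refine Int.floor_lt.2 ?_
    push_cast
    nlinarith [hx1.1, hx1.2, pow_pos (by norm_num : (0:ℝ) < 2) m]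
  exact Set.Finite.of_finite_image himg hinj

/-- Characterization of the covering indices of a piece `B ∩ I`. -/
lemma mem_covIdx_inter_iff {d : ℕ} {B : Set (EuclideanSpace ℝ (Fin d))} {k k' : ℕ}
    {j j' : Fin d → ℤ} :
    j' ∈ covIdx d k' (B ∩ dyadicCube d k j) ↔ ∃ x ∈ B, idx d k x = j ∧ idx d k' x = j' := by
  rw [mem_covIdx_iff]
  constructor
  · rintro ⟨x, ⟨hxB, hxc⟩, hxi⟩; exact ⟨x, hxB, mem_dyadicCube_iff.1 hxc, hxi⟩
  · rintro ⟨x, hxB, h1, h2⟩; exact ⟨x, ⟨hxB, mem_dyadicCube_iff.2 h1⟩, h2⟩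

/-- Characterization of the covering indices of a renormalized piece. -/
lemma mem_covIdx_renorm_iff {d L : ℕ} {B : Set (EuclideanSpace ℝ (Fin d))} {s : ℕ}
    {j j' : Fin d → ℤ} :
    j' ∈ covIdx d L (renorm d (s * L) j '' (B ∩ dyadicCube d (s * L) j)) ↔
      ∃ x ∈ B, idx d (s * L) x = j ∧ idx d ((s + 1) * L) x = fun i => j' i + 2 ^ L * j i := by
  have epow : (2:ℝ) ^ ((s + 1) * L) = 2 ^ L * 2 ^ (s * L) := by
    rw [← pow_add]; ring_nf
  constructor
  · rintro ⟨y, ⟨x, ⟨hxB, hxc⟩, rfl⟩, hyc⟩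
    refine ⟨x, hxB, mem_dyadicCube_iff.1 hxc, ?_⟩
    funext i
    have h := hyc i
    simp only [renorm, PiLp.toLp_apply] at h
    show ⌊(2:ℝ) ^ ((s + 1) * L) * x i⌋ = j' i + 2 ^ L * j i
    rw [Int.floor_eq_iff]
    constructor
    · push_cast
      rw [epow]
      nlinarith [h.1]
    · push_cast
      rw [epow]
      nlinarith [h.2]
  · rintro ⟨x, hxB, hxj, hxm⟩
    refine ⟨renorm d (s * L) j x, ⟨x, ⟨hxB, mem_dyadicCube_iff.2 hxj⟩, rfl⟩, ?_⟩
    intro i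
    have h := congrFun hxm i
    simp only [idx] at h
    rw [Int.floor_eq_iff] at h
    simp only [renorm, PiLp.toLp_apply]
    push_cast at h
    rw [epow] at h
    constructor
    · nlinarith [h.1]
    · nlinarith [h.2]

lemma collapse_one (d L S : ℕ) (R : ℕ → ℕ) (A₀ : Set (EuclideanSpace ℝ (Fin d)))
    (hA₀ : IsDyadicSet d (L * S) A₀) (hunif : IsUniform d L S R A₀)
    (s₀ : ℕ) (hs₀ : s₀ < S) :
    ∃ A₁ ⊆ A₀, IsUniform d L S (fun s => if s = s₀ then 1 else R s) A₁ ∧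
      A₀.ncard ≤ R s₀ * A₁.ncard ∧
      ∀ s < S, s ≠ s₀ → ∀ j ∈ covIdx d (s * L) A₁,
        discretize d L (renorm d (s * L) j '' (A₁ ∩ dyadicCube d (s * L) j)) =
          discretize d L (renorm d (s * L) j '' (A₀ ∩ dyadicCube d (s * L) j)) := by
  classical
  have hfin : A₀.Finite := hA₀.finite
  set T : Finset (EuclideanSpace ℝ (Fin d)) := hfin.toFinset with hT
  have hmemT : ∀ x, x ∈ T ↔ x ∈ A₀ := fun x => hfin.mem_toFinset
  have hk₀₁ : s₀ * L ≤ (s₀ + 1) * L := Nat.mul_le_mul_right L (by omega)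
  -- choose, for each parent cube index `j`, a child with the maximal number of points
  have hex : ∀ j : Fin d → ℤ, ∃ m : Fin d → ℤ, (∃ x ∈ A₀, idx d (s₀ * L) x = j) →
      ((∃ y ∈ A₀, idx d (s₀ * L) y = j ∧ idx d ((s₀ + 1) * L) y = m) ∧
       ∀ x ∈ A₀, idx d (s₀ * L) x = j →
         (T.filter fun z => idx d ((s₀ + 1) * L) z = idx d ((s₀ + 1) * L) x).card ≤
           (T.filter fun z => idx d ((s₀ + 1) * L) z = m).card) := by
    intro j
    by_cases h : ∃ x ∈ A₀, idx d (s₀ * L) x = j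
    · have hne : ((T.filter fun x => idx d (s₀ * L) x = j).image (idx d ((s₀ + 1) * L))).Nonempty := by
        obtain ⟨x, hx, hxj⟩ := h
        exact ⟨idx d ((s₀ + 1) * L) x,
          Finset.mem_image_of_mem _ (Finset.mem_filter.2 ⟨(hmemT x).2 hx, hxj⟩)⟩
      obtain ⟨m, hmM, hmax⟩ := Finset.exists_max_image _
        (fun m => (T.filter fun z => idx d ((s₀ + 1) * L) z = m).card) hne
      refine ⟨m, fun _ => ⟨?_, ?_⟩⟩
      · obtain ⟨y, hyM, hym⟩ := Finset.mem_image.1 hmM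
        obtain ⟨hyT, hyj⟩ := Finset.mem_filter.1 hyM
        exact ⟨y, (hmemT y).1 hyT, hyj, hym⟩
      · intro x hx hxj
        exact hmax _ (Finset.mem_image_of_mem _ (Finset.mem_filter.2 ⟨(hmemT x).2 hx, hxj⟩))
    · exact ⟨j, fun h' => absurd h' h⟩
  choose c hcspec using hex
  -- the collapsed set
  set A₁ : Set (EuclideanSpace ℝ (Fin d)) :=
    {x | x ∈ A₀ ∧ idx d ((s₀ + 1) * L) x = c (idx d (s₀ * L) x)} with hA₁def
  have hA₁mem : ∀ y, y ∈ A₁ ↔ y ∈ A₀ ∧ idx d ((s₀ + 1) * L) y = c (idx d (s₀ * L) y) :=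
    fun y => Iff.rfl
  have hsub : A₁ ⊆ A₀ := fun x hx => ((hA₁mem x).1 hx).1
  -- every point of `A₀` has a representative in `A₁` within the same level-`s₀` cube
  have key : ∀ x ∈ A₀, ∃ y ∈ A₁, idx d (s₀ * L) y = idx d (s₀ * L) x := by
    intro x hx
    obtain ⟨⟨y, hy, hyj, hym⟩, -⟩ := hcspec (idx d (s₀ * L) x) ⟨x, hx, rfl⟩
    exact ⟨y, (hA₁mem y).2 ⟨hy, by rw [hyj]; exact hym⟩, hyj⟩
  -- pieces at levels strictly below `s₀` coincide
  have hAeq : ∀ s, s₀ < s → ∀ j, j ∈ covIdx d (s * L) A₁ →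
      A₁ ∩ dyadicCube d (s * L) j = A₀ ∩ dyadicCube d (s * L) j := by
    intro s hs j hj
    obtain ⟨x₀, hx₀, hx₀c⟩ := hj
    have hx₀i : idx d (s * L) x₀ = j := mem_dyadicCube_iff.1 hx₀c
    ext y
    constructor
    · rintro ⟨hy, hyc⟩; exact ⟨hsub hy, hyc⟩
    · rintro ⟨hy, hyc⟩
      have hyi : idx d (s * L) y = idx d (s * L) x₀ := by
        rw [mem_dyadicCube_iff.1 hyc, hx₀i]
      have hle1 : s₀ * L ≤ s * L := Nat.mul_le_mul_right L (by omega)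
      have hle2 : (s₀ + 1) * L ≤ s * L := Nat.mul_le_mul_right L (by omega)
      have e1 := idx_eq_of_le hle1 hyi
      have e2 := idx_eq_of_le hle2 hyi
      refine ⟨(hA₁mem y).2 ⟨hy, ?_⟩, hyc⟩
      rw [e1, e2]
      exact ((hA₁mem x₀).1 hx₀).2
  -- covering indices at levels ≤ s₀ coincide
  have hcovless : ∀ s, s < s₀ → ∀ j j' (k' : ℕ), k' ≤ s₀ * L →
      ((∃ x ∈ A₁, idx d (s * L) x = j ∧ idx d k' x = j') ↔
        (∃ x ∈ A₀, idx d (s * L) x = j ∧ idx d k' x = j')) := by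
    intro s hs j j' k' hk'
    constructor
    · rintro ⟨x, hx, h1, h2⟩; exact ⟨x, hsub hx, h1, h2⟩
    · rintro ⟨x, hx, h1, h2⟩
      obtain ⟨y, hy, hfy⟩ := key x hx
      have hle1 : s * L ≤ s₀ * L := Nat.mul_le_mul_right L (by omega)
      exact ⟨y, hy, by rw [idx_eq_of_le hle1 hfy, h1], by rw [idx_eq_of_le hk' hfy, h2]⟩
  -- uniformity of the collapsed set
  have huni : IsUniform d L S (fun s => if s = s₀ then 1 else R s) A₁ := by
    intro s hs j hj
    rcases lt_trichotomy s s₀ with h | h | h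
    · -- s < s₀
      have hj' : j ∈ covIdx d (s * L) A₀ := by
        obtain ⟨x, hx1, hx2⟩ := hj; exact ⟨x, hsub hx1, hx2⟩
      have hcoveq : covIdx d ((s + 1) * L) (A₁ ∩ dyadicCube d (s * L) j)
          = covIdx d ((s + 1) * L) (A₀ ∩ dyadicCube d (s * L) j) := by
        ext j'
        rw [mem_covIdx_inter_iff, mem_covIdx_inter_iff]
        exact hcovless s h j j' ((s + 1) * L) (Nat.mul_le_mul_right L (by omega))
      unfold covNum
      beta_reduce
      rw [hcoveq, if_neg (by omega : ¬ s = s₀)]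
      exact hunif s hs j hj'
    · -- s = s₀
      subst h
      have hsing : covIdx d ((s + 1) * L) (A₁ ∩ dyadicCube d (s * L) j) = {c j} := by
        ext m
        rw [mem_covIdx_inter_iff, Set.mem_singleton_iff]
        constructor
        · rintro ⟨x, hx, h1, h2⟩
          have h3 := ((hA₁mem x).1 hx).2
          rw [h1] at h3
          rw [← h2, h3]
        · rintro rfl
          obtain ⟨x, hx, hxc⟩ := hj
          have h1 : idx d (s * L) x = j := mem_dyadicCube_iff.1 hxc
          have h3 := ((hA₁mem x).1 hx).2
          rw [h1] at h3
          exact ⟨x, hx, h1, h3⟩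
      unfold covNum
      beta_reduce
      rw [hsing, if_pos rfl, Set.ncard_singleton]
    · -- s > s₀
      have hAe := hAeq s h j hj
      have hj' : j ∈ covIdx d (s * L) A₀ := by
        obtain ⟨x, hx1, hx2⟩ := hj; exact ⟨x, hsub hx1, hx2⟩
      unfold covNum
      beta_reduce
      rw [hAe, if_neg (by omega : ¬ s = s₀)]
      exact hunif s hs j hj'
  -- cardinality bound
  have hcard : A₀.ncard ≤ R s₀ * A₁.ncard := by
    set T₁ : Finset (EuclideanSpace ℝ (Fin d)) :=
      T.filter (fun x => idx d ((s₀ + 1) * L) x = c (idx d (s₀ * L) x)) with hT₁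
    have hT₁mem : ∀ x, x ∈ T₁ ↔ x ∈ A₁ := by
      intro x
      rw [hT₁, Finset.mem_filter, hmemT, hA₁mem]
    have h0 : A₀.ncard = T.card := by
      rw [← Set.ncard_coe_finset T, hfin.coe_toFinset]
    have h01 : A₁.ncard = T₁.card := by
      rw [← Set.ncard_coe_finset T₁]
      congr 1
      ext x
      rw [Finset.mem_coe, hT₁mem]
    rw [h0, h01]
    -- fiberwise counting over parent cubes
    have h1 : T.card = ∑ j ∈ T.image (idx d (s₀ * L)),
        (T.filter (fun x => idx d (s₀ * L) x = j)).card :=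
      Finset.card_eq_sum_card_fiberwise (fun x hx => Finset.mem_image_of_mem _ hx)
    have h2 : T₁.card = ∑ j ∈ T.image (idx d (s₀ * L)),
        (T₁.filter (fun x => idx d (s₀ * L) x = j)).card :=
      Finset.card_eq_sum_card_fiberwise
        (fun x hx => Finset.mem_image_of_mem _ (Finset.mem_of_mem_filter x hx))
    rw [h1, h2, Finset.mul_sum]
    apply Finset.sum_le_sum
    intro j hjJ
    obtain ⟨x₀, hx₀T, hx₀j⟩ := Finset.mem_image.1 hjJ
    have hx₀A : x₀ ∈ A₀ := (hmemT x₀).1 hx₀T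
    obtain ⟨⟨y₀, hy₀, hy₀j, hy₀m⟩, hcmax⟩ := hcspec j ⟨x₀, hx₀A, hx₀j⟩
    -- the fiber of `T₁` over `j` is the chosen child's fiber
    have hfib : T₁.filter (fun x => idx d (s₀ * L) x = j)
        = T.filter (fun x => idx d ((s₀ + 1) * L) x = c j) := by
      ext x
      simp only [hT₁, Finset.filter_filter, Finset.mem_filter]
      constructor
      · rintro ⟨hxT, hgx, hfx⟩
        exact ⟨hxT, by rw [hgx, hfx]⟩
      · rintro ⟨hxT, hgx⟩
        have hxy : idx d ((s₀ + 1) * L) x = idx d ((s₀ + 1) * L) y₀ := by rw [hgx, hy₀m]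
        have hfx : idx d (s₀ * L) x = j := by rw [idx_eq_of_le hk₀₁ hxy, hy₀j]
        exact ⟨hxT, by rw [hfx]; exact hgx, hfx⟩
    -- decompose the fiber of `T` over `j` into children fibers
    set Tj := T.filter (fun x => idx d (s₀ * L) x = j) with hTj
    have h3 : Tj.card = ∑ m ∈ Tj.image (idx d ((s₀ + 1) * L)),
        (Tj.filter (fun x => idx d ((s₀ + 1) * L) x = m)).card :=
      Finset.card_eq_sum_card_fiberwise (fun x hx => Finset.mem_image_of_mem _ hx)
    have h4 : ∀ m ∈ Tj.image (idx d ((s₀ + 1) * L)),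
        (Tj.filter (fun x => idx d ((s₀ + 1) * L) x = m)).card ≤
          (T.filter (fun z => idx d ((s₀ + 1) * L) z = c j)).card := by
      intro m hm
      obtain ⟨x, hxTj, hxm⟩ := Finset.mem_image.1 hm
      obtain ⟨hxT, hxj⟩ := Finset.mem_filter.1 hxTj
      have hb := hcmax x ((hmemT x).1 hxT) hxj
      rw [hxm] at hb
      refine le_trans ?_ hb
      apply Finset.card_le_card
      intro z hz
      obtain ⟨hzTj, hzm⟩ := Finset.mem_filter.1 hz
      exact Finset.mem_filter.2 ⟨Finset.mem_of_mem_filter z hzTj, hzm⟩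
    -- there are exactly `R s₀` children
    have h5 : (Tj.image (idx d ((s₀ + 1) * L))).card = R s₀ := by
      have hcov' : (↑(Tj.image (idx d ((s₀ + 1) * L))) : Set (Fin d → ℤ))
          = covIdx d ((s₀ + 1) * L) (A₀ ∩ dyadicCube d (s₀ * L) j) := by
        ext m
        rw [Finset.mem_coe, Finset.mem_image, mem_covIdx_inter_iff]
        constructor
        · rintro ⟨x, hxTj, hxm⟩
          obtain ⟨hxT, hxj⟩ := Finset.mem_filter.1 hxTj
          exact ⟨x, (hmemT x).1 hxT, hxj, hxm⟩
        · rintro ⟨x, hxA, hxj, hxm⟩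
          exact ⟨x, Finset.mem_filter.2 ⟨(hmemT x).2 hxA, hxj⟩, hxm⟩
      have hjA : j ∈ covIdx d (s₀ * L) A₀ := ⟨x₀, hx₀A, mem_dyadicCube_iff.2 hx₀j⟩
      have := hunif s₀ hs₀ j hjA
      calc (Tj.image (idx d ((s₀ + 1) * L))).card
          = (↑(Tj.image (idx d ((s₀ + 1) * L))) : Set (Fin d → ℤ)).ncard :=
            (Set.ncard_coe_finset _).symm
        _ = covNum d ((s₀ + 1) * L) (A₀ ∩ dyadicCube d (s₀ * L) j) := by
            unfold covNum; rw [hcov']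
        _ = R s₀ := this
    calc Tj.card ≤ ∑ _m ∈ Tj.image (idx d ((s₀ + 1) * L)),
          (T.filter (fun z => idx d ((s₀ + 1) * L) z = c j)).card := by
          rw [h3]; exact Finset.sum_le_sum h4
      _ = (Tj.image (idx d ((s₀ + 1) * L))).card *
          (T.filter (fun z => idx d ((s₀ + 1) * L) z = c j)).card := by
          rw [Finset.sum_const, smul_eq_mul]
      _ = R s₀ * (T₁.filter (fun x => idx d (s₀ * L) x = j)).card := by
          rw [h5, hfib]
  -- discretizations agree away from level `s₀`
  refine ⟨A₁, hsub, huni, hcard, ?_⟩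
  intro s hs hne j hj
  rcases lt_or_gt_of_ne hne with h | h
  · apply discretize_congr
    ext j'
    rw [mem_covIdx_renorm_iff, mem_covIdx_renorm_iff]
    exact hcovless s h j _ ((s + 1) * L) (Nat.mul_le_mul_right L (by omega))
  · rw [hAeq s h j hj]

/-- **Collapsing the branching**: given an `(L,S)`-uniform set `A₀` with branching numbers
`(R_s)` and a set of levels `𝒮 ⊆ {0,…,S-1}`, there is an `(L,S)`-uniform subset `A ⊆ A₀`
whose branching numbers are `1` at levels of `𝒮` and `R_s` elsewhere, with
`|A| ≥ (∏_{s∈𝒮} R_s⁻¹)|A₀|`, and whose renormalized `2^{-L}`-discretizations agree with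
those of `A₀` at all levels outside `𝒮`. -/
theorem collapse_branching (d L S : ℕ) (R : ℕ → ℕ) (A₀ : Set (EuclideanSpace ℝ (Fin d)))
    (hA₀ : IsDyadicSet d (L * S) A₀) (hunif : IsUniform d L S R A₀)
    (𝒮 : Finset ℕ) (h𝒮 : 𝒮 ⊆ Finset.range S) :
    ∃ A ⊆ A₀, IsUniform d L S (fun s => if s ∈ 𝒮 then 1 else R s) A ∧
      (A.ncard : ℝ) ≥ (∏ s ∈ 𝒮, ((R s : ℝ))⁻¹) * A₀.ncard ∧
      ∀ s < S, s ∉ 𝒮 → ∀ j ∈ covIdx d (s * L) A,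
        discretize d L (renorm d (s * L) j '' (A ∩ dyadicCube d (s * L) j)) =
          discretize d L (renorm d (s * L) j '' (A₀ ∩ dyadicCube d (s * L) j)) := by
  classical
  induction 𝒮 using Finset.induction_on generalizing R A₀ with
  | empty =>
      refine ⟨A₀, subset_rfl, ?_, by simp, fun s _ _ j _ => rfl⟩
      have e : (fun s => if s ∈ (∅ : Finset ℕ) then 1 else R s) = R := by
        funext s; simp
      exact e ▸ hunif
  | @insert s₀ 𝒮' hnot ih =>
      have hs₀ : s₀ < S := by
        simpa using h𝒮 (Finset.mem_insert_self s₀ 𝒮')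
      obtain ⟨A₁, hsub₁, huni₁, hcard₁, hdisc₁⟩ := collapse_one d L S R A₀ hA₀ hunif s₀ hs₀
      have hA₁d : IsDyadicSet d (L * S) A₁ :=
        ⟨subset_trans hsub₁ hA₀.1, fun x hx => hA₀.2 x (hsub₁ hx)⟩
      have h𝒮' : 𝒮' ⊆ Finset.range S := fun s hs => h𝒮 (Finset.mem_insert_of_mem hs)
      obtain ⟨A, hsubA, huniA, hcardA, hdiscA⟩ :=
        ih (fun s => if s = s₀ then 1 else R s) A₁ hA₁d huni₁ h𝒮'
      refine ⟨A, hsubA.trans hsub₁, ?_, ?_, ?_⟩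
      · have e : (fun s => if s ∈ 𝒮' then 1 else if s = s₀ then 1 else R s)
            = (fun s => if s ∈ insert s₀ 𝒮' then 1 else R s) := by
          funext s
          by_cases h1 : s ∈ 𝒮' <;> by_cases h2 : s = s₀ <;>
            simp [h1, h2, Finset.mem_insert]
        exact e ▸ huniA
      · rw [Finset.prod_insert hnot]
        have e𝒮 : ∏ s ∈ 𝒮', (((if s = s₀ then 1 else R s : ℕ)) : ℝ)⁻¹
            = ∏ s ∈ 𝒮', ((R s : ℝ))⁻¹ := by
          refine Finset.prod_congr rfl fun s hs => ?_
          have : ¬ s = s₀ := fun h => hnot (h ▸ hs)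
          simp [this]
        rw [e𝒮] at hcardA
        have hP : (0:ℝ) ≤ ∏ s ∈ 𝒮', ((R s : ℝ))⁻¹ :=
          Finset.prod_nonneg (fun s _ => by positivity)
        by_cases hR : R s₀ = 0
        · have h0 : A₀.ncard = 0 := by
            have := hcard₁; rw [hR] at this; omega
          rw [h0, hR]
          simp
        · have hRpos : (0:ℝ) < (R s₀ : ℝ) := by
            exact_mod_cast Nat.pos_of_ne_zero hR
          have h1 : ((R s₀ : ℝ))⁻¹ * A₀.ncard ≤ (A₁.ncard : ℝ) := by
            have hc : (A₀.ncard : ℝ) ≤ (R s₀ : ℝ) * A₁.ncard := by exact_mod_cast hcard₁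
            have h2 := mul_le_mul_of_nonneg_left hc (inv_nonneg.2 hRpos.le)
            rwa [inv_mul_cancel_left₀ (ne_of_gt hRpos)] at h2
          have e2 : ((R s₀ : ℝ))⁻¹ * (∏ s ∈ 𝒮', ((R s : ℝ))⁻¹) * A₀.ncard
              = (∏ s ∈ 𝒮', ((R s : ℝ))⁻¹) * (((R s₀ : ℝ))⁻¹ * A₀.ncard) := by ring
          rw [e2]
          exact le_trans (mul_le_mul_of_nonneg_left h1 hP) hcardA
      · intro s hsS hs𝒮 j hj
        have hs1 : s ∉ 𝒮' := fun h => hs𝒮 (Finset.mem_insert_of_mem h)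
        have hs2 : s ≠ s₀ := fun h => hs𝒮 (by rw [h]; exact Finset.mem_insert_self _ _)
        have hjA₁ : j ∈ covIdx d (s * L) A₁ := by
          obtain ⟨x, hx1, hx2⟩ := hj; exact ⟨x, hsubA hx1, hx2⟩
        rw [hdiscA s hsS hs1 j hj, hdisc₁ s hsS hs2 j hjA₁]
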